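/- arXiv:2511.05198 — 3 statements merged into one kernel-verified Lean document; each statement's English description precedes it below -/
import Mathlib

section
/- Let L be a totally real number field (i.e., the image of every ring embedding L → ℂ lies in ℝ) and let χ be an algebraic Hecke character of L modulo a nonzero ideal 𝔣 with infinity type μ ∈ ℤ^{J_L}. Then μ is constant: there is an integer k with μ(σ) = k for every embedding σ ∈ J_L. -/
open NumberField FractionalIdeal
open scoped nonZeroDivisors

variable (L : Type*) [Field L] [NumberField L]

/-- The group `I(𝔣)` of fractional ideals of `L` coprime to `𝔣`: the subgroup of invertible
fractional ideals generated by the integral ideals coprime to `𝔣`. -/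
noncomputable def idealsCoprimeTo (𝔣 : Ideal (𝓞 L)) :
    Subgroup (FractionalIdeal (𝓞 L)⁰ L)ˣ :=
  Subgroup.closure
    {I : (FractionalIdeal (𝓞 L)⁰ L)ˣ |
      ∃ a : Ideal (𝓞 L), IsCoprime a 𝔣 ∧ (I : FractionalIdeal (𝓞 L)⁰ L) = a}

/-- `ξ ≡ 1 (mod^× 𝔣)`: `ξ` is a quotient `a/b` of elements of `𝒪_L` that are both
congruent to `1` modulo `𝔣`. -/
def MulCongruentOne (𝔣 : Ideal (𝓞 L)) (ξ : L) : Prop :=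
  ∃ a b : 𝓞 L, a - 1 ∈ 𝔣 ∧ b - 1 ∈ 𝔣 ∧ algebraMap (𝓞 L) L b ≠ 0 ∧
    ξ = algebraMap (𝓞 L) L a / algebraMap (𝓞 L) L b

/-- `χ : I(𝔣) → ℂ^×` is an algebraic Hecke character modulo `𝔣` with infinity type
`μ ∈ ℤ^{J_L}` if for every principal fractional ideal `(ξ)` with `ξ ≡ 1 (mod^× 𝔣)` and
`σ(ξ) > 0` for all real embeddings `σ`, one has `χ((ξ)) = ∏_σ σ(ξ)^{μ(σ)}`. -/
def IsAlgebraicHeckeCharacter (𝔣 : Ideal (𝓞 L)) (μ : (L →+* ℂ) → ℤ)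
    (χ : idealsCoprimeTo L 𝔣 →* ℂˣ) : Prop :=
  ∀ (ξ : Lˣ) (h : toPrincipalIdeal (𝓞 L) L ξ ∈ idealsCoprimeTo L 𝔣),
    MulCongruentOne L 𝔣 (ξ : L) →
    (∀ σ : L →+* ℂ, ComplexEmbedding.IsReal σ → 0 < (σ (ξ : L)).re) →
    (χ ⟨_, h⟩ : ℂ) = ∏ σ : L →+* ℂ, σ (ξ : L) ^ μ σ

set_option maxHeartbeats 1000000 in
set_option synthInstance.maxHeartbeats 400000 in
/-- Key relation: for every unit `u` of `𝓞 L`, `∑ σ, μ σ * log |σ u| = 0`. -/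
lemma key_rel_of_heckeChar
    (hreal : ∀ σ : L →+* ℂ, ComplexEmbedding.IsReal σ)
    (𝔣 : Ideal (𝓞 L)) (h𝔣 : 𝔣 ≠ 0)
    (μ : (L →+* ℂ) → ℤ) (χ : idealsCoprimeTo L 𝔣 →* ℂˣ)
    (hχ : IsAlgebraicHeckeCharacter L 𝔣 μ χ) (u : (𝓞 L)ˣ) :
    ∑ σ : L →+* ℂ, (μ σ : ℝ) * Real.log ‖σ (algebraMap (𝓞 L) L (u : 𝓞 L))‖ = 0 := by
  classical
  haveI : Fintype ((𝓞 L) ⧸ 𝔣) := @Fintype.ofFinite _ (Ideal.finiteQuotientOfFreeOfNeBot 𝔣 h𝔣)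
  obtain ⟨m, hm, hum⟩ : ∃ m : ℕ, 0 < m ∧ (Ideal.Quotient.mk 𝔣) ((u : 𝓞 L) ^ m) = 1 := by
    refine ⟨orderOf (Units.map (Ideal.Quotient.mk 𝔣).toMonoidHom u), orderOf_pos _, ?_⟩
    have h1 := congrArg Units.val
      (pow_orderOf_eq_one (Units.map (Ideal.Quotient.mk 𝔣).toMonoidHom u))
    rw [map_pow]; rw [Units.val_pow_eq_pow_val, Units.val_one] at h1; exact h1
  set n : ℕ := 2 * m with hn
  have hnpos : 0 < n := by omega
  set x : 𝓞 L := (u : 𝓞 L) ^ n with hx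
  have hxmk : (Ideal.Quotient.mk 𝔣) x = 1 := by
    rw [hx, hn, mul_comm 2 m, pow_mul, map_pow, hum, one_pow]
  have hcong : x - 1 ∈ 𝔣 := by
    have h0 : (Ideal.Quotient.mk 𝔣) (x - 1) = 0 := by
      rw [map_sub, hxmk, _root_.map_one, sub_self]
    rwa [Ideal.Quotient.eq_zero_iff_mem] at h0
  have hxu : IsUnit x := by
    rw [hx, ← Units.val_pow_eq_pow_val]; exact (u ^ n).isUnit
  set ξ : Lˣ := Units.map (algebraMap (𝓞 L) L).toMonoidHom (u ^ n) with hξdef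
  have hξ : (ξ : L) = (algebraMap (𝓞 L) L (u : 𝓞 L)) ^ n := by
    rw [hξdef]; simp [map_pow]
  have halgx : (ξ : L) = algebraMap (𝓞 L) L x := by rw [hξ, hx, map_pow]
  have hone : toPrincipalIdeal (𝓞 L) L ξ = 1 := by
    apply Units.ext
    rw [coe_toPrincipalIdeal, Units.val_one, halgx, ← coeIdeal_span_singleton,
      Ideal.span_singleton_eq_top.mpr hxu, coeIdeal_top]
  have hmem : toPrincipalIdeal (𝓞 L) L ξ ∈ idealsCoprimeTo L 𝔣 := hone ▸ one_mem _
  have hMC : MulCongruentOne L 𝔣 (ξ : L) :=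
    ⟨x, 1, hcong, by simp, by simp, by simp [halgx]⟩
  have hune : (algebraMap (𝓞 L) L (u : 𝓞 L)) ≠ 0 :=
    (u.isUnit.map (algebraMap (𝓞 L) L)).ne_zero
  have hσune : ∀ σ : L →+* ℂ, σ (algebraMap (𝓞 L) L (u : 𝓞 L)) ≠ 0 := by
    intro σ h0
    exact hune (by rwa [map_eq_zero] at h0)
  have hpos : ∀ σ : L →+* ℂ, ComplexEmbedding.IsReal σ → 0 < (σ (ξ : L)).re := by
    intro σ hσ
    set t : ℝ := (σ (algebraMap (𝓞 L) L (u : 𝓞 L))).re with ht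
    have htσ : σ (algebraMap (𝓞 L) L (u : 𝓞 L)) = (t : ℂ) := by
      have hc := ComplexEmbedding.isReal_iff.mp hσ
      have h2 : (starRingEnd ℂ) (σ (algebraMap (𝓞 L) L (u : 𝓞 L)))
          = σ (algebraMap (𝓞 L) L (u : 𝓞 L)) := RingHom.congr_fun hc _
      exact (Complex.conj_eq_iff_re.mp h2).symm
    have htne : t ≠ 0 := by
      intro h0
      apply hσune σ
      rw [htσ, h0, Complex.ofReal_zero]
    rw [hξ, map_pow, htσ, ← Complex.ofReal_pow, Complex.ofReal_re, hn, pow_mul]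
    exact pow_pos (pow_two_pos_of_ne_zero htne) m
  have h1 := hχ ξ hmem hMC hpos
  have hsub1 : (⟨toPrincipalIdeal (𝓞 L) L ξ, hmem⟩ : idealsCoprimeTo L 𝔣) = 1 :=
    Subtype.ext (by simpa using hone)
  rw [hsub1, _root_.map_one, Units.val_one] at h1
  -- take absolute values
  have h2 : (1 : ℝ) = ∏ σ : L →+* ℂ, ‖σ (ξ : L)‖ ^ μ σ := by
    have h0 := congrArg (‖·‖) h1
    simpa [norm_prod, norm_zpow] using h0
  set A : (L →+* ℂ) → ℝ := fun σ => ‖σ (algebraMap (𝓞 L) L (u : 𝓞 L))‖ with hA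
  have hApos : ∀ σ : L →+* ℂ, 0 < A σ := fun σ =>
    (norm_pos_iff.mpr (hσune σ))
  have habs : ∀ σ : L →+* ℂ, ‖σ (ξ : L)‖ = A σ ^ n := by
    intro σ
    rw [hξ, map_pow, norm_pow]
  have h3 : (0 : ℝ) = ∑ σ : L →+* ℂ, (μ σ : ℝ) * ((n : ℝ) * Real.log (A σ)) := by
    have hlog := congrArg Real.log h2
    rw [Real.log_one, Real.log_prod
      (fun σ _ => zpow_ne_zero _ (ne_of_gt (by rw [habs]; exact pow_pos (hApos σ) n)))] at hlog
    rw [hlog]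
    refine Finset.sum_congr rfl fun σ _ => ?_
    rw [habs, Real.log_zpow, Real.log_pow]
  have h4 : (n : ℝ) * ∑ σ : L →+* ℂ, (μ σ : ℝ) * Real.log (A σ) = 0 := by
    rw [Finset.mul_sum]
    calc ∑ σ : L →+* ℂ, (n : ℝ) * ((μ σ : ℝ) * Real.log (A σ))
        = ∑ σ : L →+* ℂ, (μ σ : ℝ) * ((n : ℝ) * Real.log (A σ)) :=
          Finset.sum_congr rfl fun σ _ => by ring
      _ = 0 := h3.symm
  rcases mul_eq_zero.mp h4 with h5 | h5
  · exact absurd h5 (Nat.cast_ne_zero.mpr hnpos.ne')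
  · exact h5

set_option maxHeartbeats 1000000 in
/-- If `L` is totally real, the infinity type of any algebraic Hecke character of `L`
modulo a nonzero ideal `𝔣` is constant. -/
theorem infinityType_constant_of_totallyReal
    (hreal : ∀ σ : L →+* ℂ, ComplexEmbedding.IsReal σ)
    (𝔣 : Ideal (𝓞 L)) (h𝔣 : 𝔣 ≠ 0)
    (μ : (L →+* ℂ) → ℤ) (χ : idealsCoprimeTo L 𝔣 →* ℂˣ)
    (hχ : IsAlgebraicHeckeCharacter L 𝔣 μ χ) :
    ∃ k : ℤ, ∀ σ : L →+* ℂ, μ σ = k := by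
  classical
  have hinj : Function.Injective (InfinitePlace.mk : (L →+* ℂ) → InfinitePlace L) := by
    intro σ τ h
    rcases (InfinitePlace.mk_eq_iff).mp h with h1 | h1
    · exact h1
    · exact (ComplexEmbedding.isReal_iff.mp (hreal σ)).symm.trans h1
  have hsurj : Function.Surjective (InfinitePlace.mk : (L →+* ℂ) → InfinitePlace L) :=
    fun w => ⟨w.embedding, InfinitePlace.mk_embedding w⟩
  let e : (L →+* ℂ) ≃ InfinitePlace L := Equiv.ofBijective _ ⟨hinj, hsurj⟩
  set c : InfinitePlace L → ℤ := fun w => μ (e.symm w) with hc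
  have hce : ∀ σ : L →+* ℂ, c (e σ) = μ σ := fun σ => congrArg μ (e.symm_apply_apply σ)
  have hmult : ∀ w : InfinitePlace L, InfinitePlace.mult w = 1 := by
    intro w
    rw [InfinitePlace.mult, if_pos]
    exact ⟨w.embedding, hreal _, InfinitePlace.mk_embedding w⟩
  have hrel : ∀ u : (𝓞 L)ˣ,
      ∑ w : InfinitePlace L, (c w : ℝ) * Real.log (w (algebraMap (𝓞 L) L (u : 𝓞 L))) = 0 := by
    intro u
    rw [← key_rel_of_heckeChar L hreal 𝔣 h𝔣 μ χ hχ u]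
    refine (Fintype.sum_equiv e _ _ (fun σ => ?_)).symm
    rw [hce σ]
    rfl
  set w₀ : InfinitePlace L := NumberField.Units.dirichletUnitTheorem.w₀ with hw0
  let f : ({w : InfinitePlace L // w ≠ w₀} → ℝ) →ₗ[ℝ] ℝ :=
    ∑ w : {w : InfinitePlace L // w ≠ w₀}, ((c w : ℝ) - (c w₀ : ℝ)) • LinearMap.proj w
  have hfval : ∀ y : {w : InfinitePlace L // w ≠ w₀} → ℝ,
      f y = ∑ w : {w : InfinitePlace L // w ≠ w₀}, ((c w : ℝ) - (c w₀ : ℝ)) * y w := by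
    intro y
    simp [f, LinearMap.sum_apply, LinearMap.smul_apply, LinearMap.proj_apply, smul_eq_mul]
  have hsub : ∀ h : InfinitePlace L → ℝ,
      ∑ w : {w : InfinitePlace L // w ≠ w₀}, h w.val = (∑ w : InfinitePlace L, h w) - h w₀ := by
    intro h
    rw [← Finset.sum_subtype (Finset.univ.erase w₀)
      (fun w => by simp [Finset.mem_erase]) h,
      Finset.sum_erase_eq_sub (Finset.mem_univ w₀)]
  have hfker : (NumberField.Units.unitLattice L : Set _) ⊆ (LinearMap.ker f : Set ({w : InfinitePlace L // w ≠ w₀} → ℝ)) := by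
    rintro y hy
    obtain ⟨yu, -, rfl⟩ := Submodule.mem_map.mp hy
    simp only [SetLike.mem_coe, LinearMap.mem_ker]
    set u : (𝓞 L)ˣ := Additive.toMul yu with hu
    set g : InfinitePlace L → ℝ :=
      fun w => Real.log (w (algebraMap (𝓞 L) L (u : 𝓞 L))) with hg
    have hcomp : ∀ w : {w : InfinitePlace L // w ≠ w₀},
        (AddMonoidHom.toIntLinearMap (NumberField.Units.logEmbedding L)) yu w = g w.val := by
      intro w
      have h1 : (AddMonoidHom.toIntLinearMap (NumberField.Units.logEmbedding L)) yu
          = NumberField.Units.logEmbedding L (Additive.ofMul u) := rfl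
      rw [h1, NumberField.Units.dirichletUnitTheorem.logEmbedding_component, hmult,
        Nat.cast_one, one_mul]
    have hE1 : ∑ w : {w : InfinitePlace L // w ≠ w₀}, g w.val = - g w₀ := by
      have h := NumberField.Units.dirichletUnitTheorem.sum_logEmbedding_component (K := L) u
      have h2 : ∀ w : {w : InfinitePlace L // w ≠ w₀},
          NumberField.Units.logEmbedding L (Additive.ofMul u) w = g w.val := fun w => hcomp w
      rw [Finset.sum_congr rfl (fun w _ => h2 w), hmult, Nat.cast_one, neg_mul, one_mul] at h
      exact h
    have hEall : ∑ w : InfinitePlace L, g w = 0 := by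
      have := hE1
      rw [hsub g] at this
      linarith
    rw [hfval]
    have hcomp' : ∀ w : {w : InfinitePlace L // w ≠ w₀},
        ((c w.val : ℝ) - (c w₀ : ℝ)) *
          (AddMonoidHom.toIntLinearMap (NumberField.Units.logEmbedding L)) yu w
        = ((c w.val : ℝ) - (c w₀ : ℝ)) * g w.val := fun w => by rw [hcomp w]
    rw [Finset.sum_congr rfl (fun w _ => hcomp' w),
      hsub (fun w => ((c w : ℝ) - (c w₀ : ℝ)) * g w)]
    have hsplit : ∑ w : InfinitePlace L, ((c w : ℝ) - (c w₀ : ℝ)) * g w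
        = (∑ w : InfinitePlace L, (c w : ℝ) * g w) - (c w₀ : ℝ) * ∑ w : InfinitePlace L, g w := by
      rw [Finset.mul_sum, ← Finset.sum_sub_distrib]
      exact Finset.sum_congr rfl fun w _ => by ring
    rw [hsplit, hrel u, hEall]
    ring
  have hker : LinearMap.ker f = ⊤ := by
    rw [eq_top_iff, ← NumberField.Units.dirichletUnitTheorem.unitLattice_span_eq_top (K := L)]
    exact Submodule.span_le.mpr hfker
  have hf0 : f = 0 := LinearMap.ker_eq_top.mp hker
  have hzero : ∀ w : {w : InfinitePlace L // w ≠ w₀}, c w.val = c w₀ := by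
    intro w
    have h0 : f (Pi.single w 1) = 0 := by rw [hf0]; rfl
    rw [hfval] at h0
    rw [Finset.sum_eq_single w (fun b _ hb => by
        rw [Pi.single_eq_of_ne hb, mul_zero]) (by simp), Pi.single_eq_same, mul_one] at h0
    have : (c w.val : ℝ) = (c w₀ : ℝ) := by linarith
    exact_mod_cast this
  refine ⟨c w₀, fun σ => ?_⟩
  rw [← hce σ]
  by_cases h : e σ = w₀
  · rw [h]
  · exact hzero ⟨e σ, h⟩
end

section
/- Let L be a number field and 𝔣 a nonzero ideal of 𝒪_L. Then the quotient group I(𝔣)/P_𝔣 (the ray class group of L modulo 𝔣) is finite. -/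
set_option synthInstance.maxHeartbeats 400000
set_option maxHeartbeats 1000000



open NumberField FractionalIdeal
open scoped nonZeroDivisors

variable (L : Type*) [Field L] [NumberField L]

/-- The subgroup `P_𝔣` of principal fractional ideals `(ξ)` with `ξ ≡ 1 (mod^× 𝔣)` and
`σ(ξ) > 0` for every real embedding `σ` of `L`. -/
noncomputable def rayPrincipal (𝔣 : Ideal (𝓞 L)) :
    Subgroup (FractionalIdeal (𝓞 L)⁰ L)ˣ :=
  Subgroup.closure
    {I : (FractionalIdeal (𝓞 L)⁰ L)ˣ |
      ∃ ξ : Lˣ, MulCongruentOne L 𝔣 (ξ : L) ∧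
        (∀ σ : L →+* ℂ, ComplexEmbedding.IsReal σ → 0 < (σ (ξ : L)).re) ∧
        I = toPrincipalIdeal (𝓞 L) L ξ}

section SignHom

variable {L : Type*} [Field L] [NumberField L]

/-- The sign of a real embedding applied to a unit. -/
noncomputable def raySignHom {σ : L →+* ℂ} (hσ : ComplexEmbedding.IsReal σ) : Lˣ →* ℤˣ where
  toFun ξ := if 0 < hσ.embedding (ξ : L) then 1 else -1
  map_one' := by simp
  map_mul' x y := by
    have hx : hσ.embedding (x : L) ≠ 0 :=
      fun h => x.ne_zero (hσ.embedding.injective (by simpa using h))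
    have hy : hσ.embedding (y : L) ≠ 0 :=
      fun h => y.ne_zero (hσ.embedding.injective (by simpa using h))
    have hmul : hσ.embedding ((x * y : Lˣ) : L)
        = hσ.embedding (x : L) * hσ.embedding (y : L) := by
      rw [Units.val_mul, _root_.map_mul]
    show (if 0 < hσ.embedding ((x * y : Lˣ) : L) then (1 : ℤˣ) else -1) =
        (if 0 < hσ.embedding (x : L) then (1 : ℤˣ) else -1) *
          (if 0 < hσ.embedding (y : L) then (1 : ℤˣ) else -1)
    rcases hx.lt_or_gt with h1 | h1 <;> rcases hy.lt_or_gt with h2 | h2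
    · rw [if_pos (hmul ▸ mul_pos_of_neg_of_neg h1 h2),
        if_neg (not_lt.mpr h1.le), if_neg (not_lt.mpr h2.le)]; rfl
    · rw [if_neg (by rw [hmul]; exact not_lt.mpr (mul_nonpos_of_nonpos_of_nonneg h1.le h2.le)),
        if_neg (not_lt.mpr h1.le), if_pos h2]; rfl
    · rw [if_neg (by rw [hmul]; exact not_lt.mpr (mul_nonpos_of_nonneg_of_nonpos h1.le h2.le)),
        if_pos h1, if_neg (not_lt.mpr h2.le)]; rfl
    · rw [if_pos (hmul ▸ mul_pos h1 h2), if_pos h1, if_pos h2]; rfl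

theorem raySignHom_eq_one_iff {σ : L →+* ℂ} (hσ : ComplexEmbedding.IsReal σ) (ξ : Lˣ) :
    raySignHom hσ ξ = 1 ↔ 0 < (σ (ξ : L)).re := by
  have h : (σ (ξ : L)).re = hσ.embedding (ξ : L) := by
    rw [← hσ.coe_embedding_apply, Complex.ofReal_re]
  rw [h]
  by_cases h' : 0 < hσ.embedding (ξ : L)
  · simp [raySignHom, h']
  · simp only [raySignHom, MonoidHom.coe_mk, OneHom.coe_mk, if_neg h', h', iff_false]
    decide
    
end SignHom

section ModHom

variable {L : Type*} [Field L] [NumberField L] (𝔣 : Ideal (𝓞 L))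

/-- The subgroup of `Lˣ` of elements expressible as `a/b` with `a, b` integral and
coprime to `𝔣`. -/
def coprimeUnits : Subgroup Lˣ where
  carrier := {ξ : Lˣ | ∃ a b : 𝓞 L, IsUnit (Ideal.Quotient.mk 𝔣 a) ∧
    IsUnit (Ideal.Quotient.mk 𝔣 b) ∧ b ≠ 0 ∧
    (ξ : L) = algebraMap (𝓞 L) L a / algebraMap (𝓞 L) L b}
  one_mem' := ⟨1, 1, by simp, by simp, one_ne_zero, by simp⟩
  mul_mem' := by
    rintro x y ⟨a, b, ha, hb, hb0, hx⟩ ⟨a', b', ha', hb', hb0', hy⟩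
    refine ⟨a * a', b * b', by simpa using ha.mul ha', by simpa using hb.mul hb',
      mul_ne_zero hb0 hb0', ?_⟩
    simp only [Units.val_mul, hx, hy, _root_.map_mul, div_mul_div_comm]
  inv_mem' := by
    rintro x ⟨a, b, ha, hb, hb0, hx⟩
    have hbL : algebraMap (𝓞 L) L b ≠ 0 :=
      fun h => hb0 ((IsFractionRing.injective (𝓞 L) L) (by simpa using h))
    have ha0 : a ≠ 0 := by
      intro h
      apply x.ne_zero
      rw [hx, h]
      simp
    refine ⟨b, a, hb, ha, ha0, ?_⟩
    rw [Units.val_inv_eq_inv_val, hx, inv_div]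

theorem mem_coprimeUnits {ξ : Lˣ} : ξ ∈ coprimeUnits 𝔣 ↔ ∃ a b : 𝓞 L,
    IsUnit (Ideal.Quotient.mk 𝔣 a) ∧ IsUnit (Ideal.Quotient.mk 𝔣 b) ∧ b ≠ 0 ∧
    (ξ : L) = algebraMap (𝓞 L) L a / algebraMap (𝓞 L) L b := Iff.rfl

theorem isUnit_unit_mul {M : Type*} [Monoid M] {x y : M} (hx : IsUnit x) (hy : IsUnit y)
    (hxy : IsUnit (x * y)) : hxy.unit = hx.unit * hy.unit :=
  Units.ext (by rw [Units.val_mul, IsUnit.unit_spec, IsUnit.unit_spec, IsUnit.unit_spec])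

theorem unitPair_eq {a b a' b' : 𝓞 L}
    (ha : IsUnit (Ideal.Quotient.mk 𝔣 a)) (hb : IsUnit (Ideal.Quotient.mk 𝔣 b))
    (ha' : IsUnit (Ideal.Quotient.mk 𝔣 a')) (hb' : IsUnit (Ideal.Quotient.mk 𝔣 b'))
    (hb0 : b ≠ 0) (hb0' : b' ≠ 0)
    (h : algebraMap (𝓞 L) L a / algebraMap (𝓞 L) L b
      = algebraMap (𝓞 L) L a' / algebraMap (𝓞 L) L b') :
    ha.unit * hb.unit⁻¹ = ha'.unit * hb'.unit⁻¹ := by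
  have hinj : Function.Injective (algebraMap (𝓞 L) L) := IsFractionRing.injective (𝓞 L) L
  have hbL : algebraMap (𝓞 L) L b ≠ 0 := fun hz => hb0 (hinj (by simpa using hz))
  have hbL' : algebraMap (𝓞 L) L b' ≠ 0 := fun hz => hb0' (hinj (by simpa using hz))
  have hcross : a * b' = a' * b := by
    apply hinj
    rw [_root_.map_mul, _root_.map_mul]
    field_simp at h
    linear_combination h
  have hq : Ideal.Quotient.mk 𝔣 a * Ideal.Quotient.mk 𝔣 b'
      = Ideal.Quotient.mk 𝔣 a' * Ideal.Quotient.mk 𝔣 b := by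
    rw [← _root_.map_mul, ← _root_.map_mul, hcross]
  rw [← div_eq_mul_inv, ← div_eq_mul_inv, div_eq_div_iff_mul_eq_mul, Units.ext_iff,
    Units.val_mul, Units.val_mul, IsUnit.unit_spec, IsUnit.unit_spec, IsUnit.unit_spec,
    IsUnit.unit_spec]
  exact hq

/-- The image in `((𝓞 L)/𝔣)ˣ` of an element of `coprimeUnits 𝔣` (choice-based). -/
noncomputable def modUnitFun (ξ : coprimeUnits 𝔣) : ((𝓞 L) ⧸ 𝔣)ˣ :=
  ((mem_coprimeUnits 𝔣).mp ξ.2).choose_spec.choose_spec.1.unit *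
    (((mem_coprimeUnits 𝔣).mp ξ.2).choose_spec.choose_spec.2.1.unit)⁻¹

theorem modUnitFun_eq (ξ : coprimeUnits 𝔣) {a b : 𝓞 L}
    (ha : IsUnit (Ideal.Quotient.mk 𝔣 a)) (hb : IsUnit (Ideal.Quotient.mk 𝔣 b))
    (hb0 : b ≠ 0) (hx : ((ξ : Lˣ) : L) = algebraMap (𝓞 L) L a / algebraMap (𝓞 L) L b) :
    modUnitFun 𝔣 ξ = ha.unit * hb.unit⁻¹ :=
  unitPair_eq 𝔣 _ _ ha hb
    ((mem_coprimeUnits 𝔣).mp ξ.2).choose_spec.choose_spec.2.2.1 hb0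
    ((((mem_coprimeUnits 𝔣).mp ξ.2).choose_spec.choose_spec.2.2.2).symm.trans hx)

/-- The homomorphism `coprimeUnits 𝔣 →* ((𝓞 L)/𝔣)ˣ`. -/
noncomputable def modHom : coprimeUnits 𝔣 →* ((𝓞 L) ⧸ 𝔣)ˣ :=
  MonoidHom.mk' (modUnitFun 𝔣) (by
    intro x y
    obtain ⟨a, b, ha, hb, hb0, hx⟩ := (mem_coprimeUnits 𝔣).mp x.2
    obtain ⟨a', b', ha', hb', hb0', hy⟩ := (mem_coprimeUnits 𝔣).mp y.2
    have haa : IsUnit (Ideal.Quotient.mk 𝔣 (a * a')) := by simpa using ha.mul ha'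
    have hbb : IsUnit (Ideal.Quotient.mk 𝔣 (b * b')) := by simpa using hb.mul hb'
    have hxy : (((x * y : coprimeUnits 𝔣) : Lˣ) : L)
        = algebraMap (𝓞 L) L (a * a') / algebraMap (𝓞 L) L (b * b') := by
      push_cast
      rw [hx, hy, div_mul_div_comm]
    rw [modUnitFun_eq 𝔣 x ha hb hb0 hx, modUnitFun_eq 𝔣 y ha' hb' hb0' hy,
      modUnitFun_eq 𝔣 (x * y) haa hbb (mul_ne_zero hb0 hb0') hxy,
      (Units.ext (by rw [Units.val_mul, IsUnit.unit_spec, IsUnit.unit_spec, IsUnit.unit_spec,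
        _root_.map_mul]) : haa.unit = ha.unit * ha'.unit),
      (Units.ext (by rw [Units.val_mul, IsUnit.unit_spec, IsUnit.unit_spec, IsUnit.unit_spec,
        _root_.map_mul]) : hbb.unit = hb.unit * hb'.unit), mul_inv]
    exact mul_mul_mul_comm _ _ _ _)

theorem modHom_eq (ξ : coprimeUnits 𝔣) {a b : 𝓞 L}
    (ha : IsUnit (Ideal.Quotient.mk 𝔣 a)) (hb : IsUnit (Ideal.Quotient.mk 𝔣 b))
    (hb0 : b ≠ 0) (hx : ((ξ : Lˣ) : L) = algebraMap (𝓞 L) L a / algebraMap (𝓞 L) L b) :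
    modHom 𝔣 ξ = ha.unit * hb.unit⁻¹ := modUnitFun_eq 𝔣 ξ ha hb hb0 hx

end ModHom

section Approx

variable {L : Type*} [Field L] [NumberField L] {𝔣 : Ideal (𝓞 L)}

theorem exists_integral_rep {I : (FractionalIdeal (𝓞 L)⁰ L)ˣ}
    (hI : I ∈ idealsCoprimeTo L 𝔣) :
    ∃ 𝔞 𝔟 : Ideal (𝓞 L), 𝔞 ≠ ⊥ ∧ 𝔟 ≠ ⊥ ∧ IsCoprime 𝔞 𝔣 ∧ IsCoprime 𝔟 𝔣 ∧
      (I : FractionalIdeal (𝓞 L)⁰ L) * 𝔟 = 𝔞 := by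
  have htopco : IsCoprime (⊤ : Ideal (𝓞 L)) 𝔣 := by
    rw [Ideal.isCoprime_iff_sup_eq]; exact top_sup_eq _
  refine Subgroup.closure_induction ?_ ?_ ?_ ?_ hI
  · rintro x ⟨a, hcop, hx⟩
    refine ⟨a, ⊤, ?_, top_ne_bot, hcop, htopco, ?_⟩
    · intro h
      rw [h] at hx
      exact Units.ne_zero x (by simpa using hx)
    · rw [coeIdeal_top, mul_one, hx]
  · exact ⟨⊤, ⊤, top_ne_bot, top_ne_bot, htopco, htopco, by
      rw [coeIdeal_top, mul_one, Units.val_one]⟩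
  · rintro x y - - ⟨𝔞, 𝔟, h𝔞, h𝔟, c𝔞, c𝔟, hx⟩ ⟨𝔞', 𝔟', h𝔞', h𝔟', c𝔞', c𝔟', hy⟩
    refine ⟨𝔞 * 𝔞', 𝔟 * 𝔟', mul_ne_zero h𝔞 h𝔞', mul_ne_zero h𝔟 h𝔟',
      c𝔞.mul_left c𝔞', c𝔟.mul_left c𝔟', ?_⟩
    rw [coeIdeal_mul, coeIdeal_mul, Units.val_mul, ← hx, ← hy]
    ring
  · rintro x - ⟨𝔞, 𝔟, h𝔞, h𝔟, c𝔞, c𝔟, hx⟩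
    refine ⟨𝔟, 𝔞, h𝔟, h𝔞, c𝔟, c𝔞, ?_⟩
    have h1 : ((x⁻¹ * x : (FractionalIdeal (𝓞 L)⁰ L)ˣ) : FractionalIdeal (𝓞 L)⁰ L) = 1 := by
      rw [inv_mul_cancel, Units.val_one]
    have h2 : ((x⁻¹ : (FractionalIdeal (𝓞 L)⁰ L)ˣ) : FractionalIdeal (𝓞 L)⁰ L) *
        ((x : FractionalIdeal (𝓞 L)⁰ L) * (𝔟 : FractionalIdeal (𝓞 L)⁰ L))
        = (𝔟 : FractionalIdeal (𝓞 L)⁰ L) := by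
      rw [← mul_assoc, ← Units.val_mul, h1, one_mul]
    rw [← h2, hx]

theorem mem_coprimeUnits_of_principal (ξ : Lˣ)
    (h : toPrincipalIdeal (𝓞 L) L ξ ∈ idealsCoprimeTo L 𝔣) : ξ ∈ coprimeUnits 𝔣 := by
  obtain ⟨𝔞, 𝔟, h𝔞, h𝔟, c𝔞, c𝔟, heq⟩ := exists_integral_rep h
  rw [coe_toPrincipalIdeal] at heq
  -- choose b ∈ 𝔟 nonzero with `mk b` a unit
  obtain ⟨b, hb𝔟, hb0, hbu⟩ : ∃ b : 𝓞 L, b ∈ 𝔟 ∧ b ≠ 0 ∧ IsUnit (Ideal.Quotient.mk 𝔣 b) := by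
    by_cases htop : 𝔣 = ⊤
    · obtain ⟨b, hb, hb0⟩ := Submodule.exists_mem_ne_zero_of_ne_bot h𝔟
      have : Subsingleton ((𝓞 L) ⧸ 𝔣) := by
        rw [htop]
        infer_instance
      exact ⟨b, hb, hb0, isUnit_of_subsingleton _⟩
    · have hsup : 𝔟 ⊔ 𝔣 = ⊤ := Ideal.isCoprime_iff_sup_eq.mp c𝔟
      obtain ⟨b, hb, f, hf, hbf⟩ := Submodule.mem_sup.mp
        (hsup ▸ Submodule.mem_top : (1 : 𝓞 L) ∈ 𝔟 ⊔ 𝔣)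
      refine ⟨b, hb, ?_, ?_⟩
      · rintro rfl
        rw [zero_add] at hbf
        exact htop ((Ideal.eq_top_iff_one _).mpr (hbf ▸ hf))
      · have : Ideal.Quotient.mk 𝔣 b = 1 := by
          rw [← map_one (Ideal.Quotient.mk 𝔣)]
          exact Ideal.Quotient.eq.mpr (by rw [← hbf]; simpa using hf)
        rw [this]; exact isUnit_one
  have hinj : Function.Injective (algebraMap (𝓞 L) L) := IsFractionRing.injective (𝓞 L) L
  have hbL : algebraMap (𝓞 L) L b ≠ 0 := fun hz => hb0 (hinj (by simpa using hz))
  -- get a with algebraMap a = ξ * b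
  have hmem : (ξ : L) * algebraMap (𝓞 L) L b ∈ (𝔞 : FractionalIdeal (𝓞 L)⁰ L) := by
    rw [← heq]
    exact mul_mem_mul (mem_spanSingleton_self _ _) (mem_coeIdeal_of_mem _ hb𝔟)
  obtain ⟨a, ha𝔞, ha⟩ := (mem_coeIdeal _).mp hmem
  have hξ : (ξ : L) = algebraMap (𝓞 L) L a / algebraMap (𝓞 L) L b := by
    rw [ha, mul_div_assoc, div_self hbL, mul_one]
  -- ideal-level equation : span a * 𝔟 = span b * 𝔞
  have hideal : Ideal.span {a} * 𝔟 = Ideal.span {b} * 𝔞 := by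
    apply FractionalIdeal.coeIdeal_injective (K := L)
    show ((Ideal.span {a} * 𝔟 : Ideal (𝓞 L)) : FractionalIdeal (𝓞 L)⁰ L)
      = ((Ideal.span {b} * 𝔞 : Ideal (𝓞 L)) : FractionalIdeal (𝓞 L)⁰ L)
    rw [coeIdeal_mul, coeIdeal_mul, coeIdeal_span_singleton, coeIdeal_span_singleton,
      ha, ← spanSingleton_mul_spanSingleton, mul_right_comm, heq, mul_comm]
  -- coprimality of span b
  have hspanb : IsCoprime (Ideal.span {b} : Ideal (𝓞 L)) 𝔣 := by
    rw [Ideal.isCoprime_iff_sup_eq, eq_top_iff]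
    obtain ⟨u, hu⟩ := hbu
    obtain ⟨c, hc⟩ := Ideal.Quotient.mk_surjective (↑u⁻¹ : (𝓞 L) ⧸ 𝔣)
    have hbc : b * c - 1 ∈ 𝔣 := by
      rw [← Ideal.Quotient.eq_zero_iff_mem, map_sub, _root_.map_mul, hc, ← hu,
        Units.mul_inv, _root_.map_one, sub_self]
    rintro x -
    have : x = x * (b * c) - x * (b * c - 1) := by ring
    rw [this]
    exact Submodule.sub_mem _
      (Ideal.mem_sup_left (Ideal.mem_span_singleton'.mpr ⟨x * c, by ring⟩))
      (Ideal.mem_sup_right (Ideal.mul_mem_left _ _ hbc))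
  -- span a coprime to 𝔣
  have hspana : Ideal.span {a} ⊔ 𝔣 = ⊤ := by
    rw [eq_top_iff, ← Ideal.isCoprime_iff_sup_eq.mp (hspanb.mul_left c𝔞), ← hideal]
    exact sup_le_sup_right Ideal.mul_le_left _
  have hau : IsUnit (Ideal.Quotient.mk 𝔣 a) := by
    obtain ⟨x, hx, f, hf, hxf⟩ := Submodule.mem_sup.mp
      (hspana ▸ Submodule.mem_top : (1 : 𝓞 L) ∈ Ideal.span {a} ⊔ 𝔣)
    obtain ⟨c', hc'⟩ := Ideal.mem_span_singleton'.mp hx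
    refine IsUnit.of_mul_eq_one (Ideal.Quotient.mk 𝔣 c') ?_
    rw [mul_comm, ← _root_.map_mul, hc']
    have hf0 : Ideal.Quotient.mk 𝔣 f = 0 := Ideal.Quotient.eq_zero_iff_mem.mpr hf
    rw [← map_one (Ideal.Quotient.mk 𝔣), ← hxf, _root_.map_add, hf0, add_zero]
  exact (mem_coprimeUnits 𝔣).mpr ⟨a, b, hau, hbu, hb0, hξ⟩

end Approx

/-- The ray class group `I(𝔣)/P_𝔣` of a number field `L` modulo a nonzero ideal `𝔣`
is finite. -/
theorem rayClassGroup_finite (𝔣 : Ideal (𝓞 L)) (h𝔣 : 𝔣 ≠ 0) :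
    Finite (idealsCoprimeTo L 𝔣 ⧸ (rayPrincipal L 𝔣).subgroupOf (idealsCoprimeTo L 𝔣)) := by
  classical
  set C := idealsCoprimeTo L 𝔣 with hC
  set B := (toPrincipalIdeal (𝓞 L) L).range ⊓ C with hB
  set A := rayPrincipal L 𝔣 ⊓ C with hA
  have hray_le : rayPrincipal L 𝔣 ≤ (toPrincipalIdeal (𝓞 L) L).range := by
    rw [rayPrincipal]
    refine (Subgroup.closure_le _).mpr ?_
    rintro I ⟨ξ, -, -, rfl⟩
    exact ⟨ξ, rfl⟩
  have hAB : A ≤ B := inf_le_inf_right _ hray_le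
  have hBC : B ≤ C := inf_le_right
  -- Step 1 : `B` has finite index in `C`, via the (finite) class group.
  have finBC : Finite ((↥C) ⧸ (B.subgroupOf C)) := by
    let f : ↥C →* ClassGroup (𝓞 L) := (ClassGroup.mk L).comp C.subtype
    have hker : B.subgroupOf C = f.ker := by
      ext x
      rw [Subgroup.mem_subgroupOf, MonoidHom.mem_ker]
      show (x : (FractionalIdeal (𝓞 L)⁰ L)ˣ) ∈ B ↔
        ClassGroup.mk L ((x : (FractionalIdeal (𝓞 L)⁰ L)ˣ)) = 1
      rw [hB, Subgroup.mem_inf, ClassGroup.mk_eq_one_iff]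
      constructor
      · rintro ⟨hr, -⟩
        obtain ⟨y, hy⟩ := mem_principal_ideals_iff.mp hr
        exact (isPrincipal_iff _).mpr ⟨y, hy.symm⟩
      · intro h1
        refine ⟨?_, x.2⟩
        obtain ⟨y, hy⟩ := (isPrincipal_iff _).mp h1
        exact mem_principal_ideals_iff.mpr ⟨y, hy.symm⟩
    rw [hker]
    exact Finite.of_injective _ (QuotientGroup.kerLift_injective f)
  -- Step 2 : `A` has finite index in `B`, via congruences and signs.
  have finAB : Finite ((↥B) ⧸ (A.subgroupOf B)) := by
    set V : Subgroup Lˣ := B.comap (toPrincipalIdeal (𝓞 L) L) with hV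
    have hVW : V ≤ coprimeUnits 𝔣 := by
      intro ξ hξ
      exact mem_coprimeUnits_of_principal ξ (Subgroup.mem_inf.mp (Subgroup.mem_comap.mp hξ)).2
    set φ : ↥V →* ↥B := (toPrincipalIdeal (𝓞 L) L).subgroupComap B with hφ
    have hφsurj : Function.Surjective φ := by
      rintro ⟨b, hb⟩
      obtain ⟨hr, hc⟩ := Subgroup.mem_inf.mp hb
      obtain ⟨ξ, hξ⟩ := hr
      exact ⟨⟨ξ, Subgroup.mem_comap.mpr (by rw [hξ]; exact hb)⟩, Subtype.ext hξ⟩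
    set ψ := (QuotientGroup.mk' (A.subgroupOf B)).comp φ with hψ
    have hψsurj : Function.Surjective ψ :=
      (QuotientGroup.mk'_surjective _).comp hφsurj
    -- the finite target
    have hfin2 : Finite ({σ : L →+* ℂ // ComplexEmbedding.IsReal σ} → ℤˣ) := by
      infer_instance
    haveI : Fintype ((𝓞 L) ⧸ 𝔣) := @Fintype.ofFinite _ (Ideal.finiteQuotientOfFreeOfNeBot 𝔣 h𝔣)
    let g₂ : Lˣ →* ({σ : L →+* ℂ // ComplexEmbedding.IsReal σ} → ℤˣ) :=
      MonoidHom.mk' (fun ξ σ => raySignHom σ.2 ξ)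
        (by intro x y; funext σ; exact map_mul (raySignHom σ.2) x y)
    let g : ↥V →* (((𝓞 L) ⧸ 𝔣)ˣ × ({σ : L →+* ℂ // ComplexEmbedding.IsReal σ} → ℤˣ)) :=
      ((modHom 𝔣).comp (Subgroup.inclusion hVW)).prod (g₂.comp V.subtype)
    have hkerg : g.ker ≤ ψ.ker := by
      rintro x hg
      rw [MonoidHom.mem_ker] at hg
      have hg1 : modHom 𝔣 (Subgroup.inclusion hVW x) = 1 := congrArg Prod.fst hg
      have hg2 : g₂ (x : Lˣ) = 1 := congrArg Prod.snd hg
      -- representation of `x`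
      obtain ⟨a, b, ha, hb, hb0, hx⟩ := (mem_coprimeUnits 𝔣).mp (hVW x.2)
      -- `a ≡ b mod 𝔣`
      have hab : Ideal.Quotient.mk 𝔣 a = Ideal.Quotient.mk 𝔣 b := by
        have := modHom_eq 𝔣 (Subgroup.inclusion hVW x) ha hb hb0
          (by rw [Subgroup.coe_inclusion]; exact hx)
        rw [hg1] at this
        have h2 := mul_inv_eq_one.mp this.symm
        have := congrArg Units.val h2
        rwa [IsUnit.unit_spec, IsUnit.unit_spec] at this
      -- pick c with b * c ≡ 1
      obtain ⟨u, hu⟩ := hb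
      obtain ⟨c, hcc⟩ := Ideal.Quotient.mk_surjective ((u⁻¹ : (((𝓞 L) ⧸ 𝔣))ˣ) : (𝓞 L) ⧸ 𝔣)
      -- replace c by a nonzero element with the same image
      obtain ⟨c', hc'0, hc'⟩ : ∃ c' : 𝓞 L, c' ≠ 0 ∧
          Ideal.Quotient.mk 𝔣 c' = Ideal.Quotient.mk 𝔣 c := by
        by_cases hc0 : c = 0
        · obtain ⟨f0, hf0mem, hf00⟩ := Submodule.exists_mem_ne_zero_of_ne_bot h𝔣
          exact ⟨f0, hf00, by rw [hc0, _root_.map_zero, Ideal.Quotient.eq_zero_iff_mem.mpr hf0mem]⟩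
        · exact ⟨c, hc0, rfl⟩
      have hbc : Ideal.Quotient.mk 𝔣 (b * c') = 1 := by
        rw [_root_.map_mul, hc', hcc, ← hu, Units.mul_inv]
      have hac : Ideal.Quotient.mk 𝔣 (a * c') = 1 := by
        rw [_root_.map_mul, hab, ← _root_.map_mul, hbc]
      -- nonvanishing
      have hinj : Function.Injective (algebraMap (𝓞 L) L) := IsFractionRing.injective (𝓞 L) L
      have hbL : algebraMap (𝓞 L) L b ≠ 0 := fun hz => hb0 (hinj (by simpa using hz))
      have hcL : algebraMap (𝓞 L) L c' ≠ 0 := fun hz => hc'0 (hinj (by simpa using hz))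
      -- `x` generates a ray-principal ideal
      have hray : toPrincipalIdeal (𝓞 L) L (x : Lˣ) ∈ rayPrincipal L 𝔣 := by
        apply Subgroup.subset_closure
        refine ⟨(x : Lˣ), ⟨a * c', b * c', ?_, ?_, ?_, ?_⟩, ?_, rfl⟩
        · rw [← Ideal.Quotient.eq_zero_iff_mem, map_sub, hac, _root_.map_one, sub_self]
        · rw [← Ideal.Quotient.eq_zero_iff_mem, map_sub, hbc, _root_.map_one, sub_self]
        · rw [_root_.map_mul]
          exact mul_ne_zero hbL hcL
        · rw [_root_.map_mul, _root_.map_mul, mul_div_mul_right _ _ hcL]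
          exact hx
        · intro σ hσ
          have := congrFun hg2 ⟨σ, hσ⟩
          exact (raySignHom_eq_one_iff hσ (x : Lˣ)).mp this
      -- conclude `ψ x = 1`
      rw [MonoidHom.mem_ker, hψ, MonoidHom.comp_apply, QuotientGroup.mk'_apply,
        QuotientGroup.eq_one_iff]
      rw [Subgroup.mem_subgroupOf]
      have hcoe : ((φ x : ↥B) : (FractionalIdeal (𝓞 L)⁰ L)ˣ)
          = toPrincipalIdeal (𝓞 L) L (x : Lˣ) := rfl
      rw [hcoe, hA, Subgroup.mem_inf]
      exact ⟨hray, (Subgroup.mem_inf.mp (Subgroup.mem_comap.mp x.2)).2⟩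
    have finV : Finite (↥V ⧸ g.ker) := Finite.of_injective _ (QuotientGroup.kerLift_injective g)
    have hpsiker : ψ.ker.index ≠ 0 := by
      have h1 : g.ker.index ≠ 0 := @Subgroup.index_ne_zero_of_finite _ _ _ finV
      intro h0
      exact h1 (zero_dvd_iff.mp (h0 ▸ Subgroup.index_dvd_of_le hkerg))
    have finQV : Finite (↥V ⧸ ψ.ker) := Nat.finite_of_card_ne_zero hpsiker
    exact Finite.of_equiv _ (QuotientGroup.quotientKerEquivOfSurjective ψ hψsurj).toEquiv
  -- Combine the two steps.
  have h1 : A.relIndex B ≠ 0 := @Subgroup.index_ne_zero_of_finite _ _ _ finAB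
  have h2 : B.relIndex C ≠ 0 := @Subgroup.index_ne_zero_of_finite _ _ _ finBC
  have h3 : A.relIndex C ≠ 0 := by
    rw [← Subgroup.relIndex_mul_relIndex A B C hAB hBC]
    exact mul_ne_zero h1 h2
  have h4 : (rayPrincipal L 𝔣).relIndex C ≠ 0 := by
    rw [hA, Subgroup.inf_relIndex_right] at h3
    exact h3
  exact Nat.finite_of_card_ne_zero h4
end

section
/- Let p be a prime. For each integer n ≥ 0 let c_n : ℤ_p → ℤ_p be the continuous function c_n(x) = x(x−1)⋯(x−n+1)/n! (the n-th binomial coefficient function, which takes values in ℤ_p). Then the ℤ_p-linear map from Meas(ℤ_p, ℤ_p) := Hom_{ℤ_p}(C(ℤ_p, ℤ_p), ℤ_p) to the formal power series ring ℤ_p[[T]] sending a measure μ to Σ_{n≥0} μ(c_n)·T^n is bijective, i.e., an isomorphism of ℤ_p-modules. -/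
open scoped Nat

/-- The coefficient map on `p`-adic measures, `μ ↦ ∑_{n ≥ 0} μ(c_n)·Tⁿ`, where
`c : ℕ → C(ℤ_p, ℤ_p)` is intended to be the sequence of binomial coefficient
functions (the Mahler basis). -/
noncomputable def measureToPowerSeries (p : ℕ) [Fact p.Prime]
    (c : ℕ → C(ℤ_[p], ℤ_[p])) :
    (C(ℤ_[p], ℤ_[p]) →ₗ[ℤ_[p]] ℤ_[p]) →ₗ[ℤ_[p]] PowerSeries ℤ_[p] where
  toFun μ := PowerSeries.mk fun n => μ (c n)
  map_add' μ ν := by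
    ext n
    simp [PowerSeries.coeff_mk]
  map_smul' r μ := by
    ext n
    simp [PowerSeries.coeff_mk]

namespace MahlerMeasureAux

open Finset Filter PadicInt
open scoped Topology

variable {p : ℕ} [Fact p.Prime]

/-- The canonical embedding `C(ℤ_[p], ℤ_[p]) → C(ℤ_[p], ℚ_[p])`. -/
noncomputable def toQp (f : C(ℤ_[p], ℤ_[p])) : C(ℤ_[p], ℚ_[p]) :=
  ⟨fun x => (f x : ℚ_[p]), continuous_subtype_val.comp f.continuous⟩

lemma coe_sum {ι : Type*} (s : Finset ι) (F : ι → ℤ_[p]) :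
    ((∑ i ∈ s, F i : ℤ_[p]) : ℚ_[p]) = ∑ i ∈ s, (F i : ℚ_[p]) :=
  map_sum (PadicInt.Coe.ringHom : ℤ_[p] →+* ℚ_[p]) F s

instance : IsBoundedSMul ℤ_[p] ℚ_[p] :=
  IsBoundedSMul.of_norm_smul_le fun r x => by
    rw [Algebra.smul_def, norm_mul]; rfl

lemma toQp_apply (f : C(ℤ_[p], ℤ_[p])) (x : ℤ_[p]) : toQp f x = (f x : ℚ_[p]) := rfl

lemma cast_fwdDiff (f : ℤ_[p] → ℤ_[p]) (n : ℕ) (x : ℤ_[p]) :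
    (((fwdDiff 1)^[n] f x : ℤ_[p]) : ℚ_[p])
      = (fwdDiff (1:ℤ_[p]))^[n] (fun y => (f y : ℚ_[p])) x := by
  simp only [fwdDiff_iter_eq_sum_shift]
  rw [show ((↑) : ℤ_[p] → ℚ_[p]) = (PadicInt.Coe.ringHom : ℤ_[p] →+* ℚ_[p]) from rfl, map_sum]
  simp [zsmul_eq_mul]

lemma prod_range_nat (n m : ℕ) :
    (∏ i ∈ Finset.range n, ((m : ℚ_[p]) - (i : ℚ_[p]))) = (n ! : ℚ_[p]) * (m.choose n : ℚ_[p]) := by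
  rcases le_or_gt n m with h | h
  · have : ∀ i ∈ Finset.range n, ((m : ℚ_[p]) - (i : ℚ_[p])) = ((m - i : ℕ) : ℚ_[p]) := by
      intro i hi
      have : i ≤ m := le_trans (Nat.le_of_lt_succ (Nat.lt_succ_of_lt (Finset.mem_range.mp hi))) h
      push_cast [this]
      ring
    rw [Finset.prod_congr rfl this, ← Nat.cast_prod, ← Nat.descFactorial_eq_prod_range,
      Nat.descFactorial_eq_factorial_mul_choose]
    push_cast; ring
  · rw [Nat.choose_eq_zero_of_lt h, Finset.prod_eq_zero (Finset.mem_range.mpr h)] <;> simp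

variable (c : ℕ → C(ℤ_[p], ℤ_[p]))
    (hc : ∀ (n : ℕ) (x : ℤ_[p]),
      ((c n x : ℤ_[p]) : ℚ_[p]) =
        (∏ i ∈ Finset.range n, ((x : ℚ_[p]) - (i : ℚ_[p]))) / (n ! : ℚ_[p]))

include hc

lemma c_cast_eq_mahler (n : ℕ) (x : ℤ_[p]) : ((c n x : ℤ_[p]) : ℚ_[p]) = mahler n x := by
  have h1 : Continuous fun x : ℤ_[p] => ((c n x : ℤ_[p]) : ℚ_[p]) :=
    continuous_subtype_val.comp (c n).continuous
  have := PadicInt.denseRange_natCast.equalizer h1 (continuous_subtype_val.comp (mahler n).continuous :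
      Continuous fun x => ((mahler n x : ℤ_[p]) : ℚ_[p]))
    (funext fun m => ?_)
  · exact congrFun this x
  · simp only [Function.comp_apply, hc n, mahler_natCast_eq, PadicInt.coe_natCast]
    rw [prod_range_nat, mul_comm, mul_div_assoc, div_self
      (by exact_mod_cast n.factorial_ne_zero), mul_one]
    show _ = ((mahler n (m : ℤ_[p]) : ℤ_[p]) : ℚ_[p])
    rw [mahler_natCast_eq, PadicInt.coe_natCast]

omit hc in
lemma fwdDiff_mahler_zero (n m : ℕ) :
    (fwdDiff (1:ℤ_[p]))^[m] (⇑(toQp (mahler n))) 0 = if m = n then 1 else 0 := by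
  have h := congrArg (fun z : ℤ => (z : ℚ_[p])) (fwdDiff_iter_choose_zero n m)
  simp only [fwdDiff_iter_eq_sum_shift] at h ⊢
  push_cast at h
  rw [← h]
  refine Finset.sum_congr rfl fun k hk => ?_
  have : ((0 : ℤ_[p]) + k • 1) = ((k : ℕ) : ℤ_[p]) := by push_cast; ring
  rw [this, toQp_apply, mahler_natCast_eq]
  simp [zsmul_eq_mul]

lemma fwdDiff_c_zero (n m : ℕ) :
    (fwdDiff (1:ℤ_[p]))^[m] (⇑(c n)) 0 = if m = n then 1 else 0 := by
  apply Subtype.coe_injective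
  show (((fwdDiff 1)^[m] (⇑(c n)) 0 : ℤ_[p]) : ℚ_[p]) = _
  rw [cast_fwdDiff]
  have : (fun y : ℤ_[p] => ((c n y : ℤ_[p]) : ℚ_[p])) = ⇑(toQp (mahler n)) :=
    funext fun y => c_cast_eq_mahler c hc n y
  rw [this, fwdDiff_mahler_zero]
  split <;> simp

omit hc in
lemma fwdDiff_tendsto_zero' (f : C(ℤ_[p], ℤ_[p])) :
    Tendsto (fun n => (fwdDiff (1:ℤ_[p]))^[n] (⇑f) 0) atTop (𝓝 0) := by
  have h := PadicInt.fwdDiff_tendsto_zero (toQp f)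
  rw [tendsto_zero_iff_norm_tendsto_zero] at h ⊢
  convert h using 2 with n
  rw [PadicInt.norm_def, cast_fwdDiff]
  rfl

omit hc in
lemma summable_aux (f : C(ℤ_[p], ℤ_[p])) (b : ℕ → ℤ_[p]) :
    Summable fun n => b n * (fwdDiff (1:ℤ_[p]))^[n] (⇑f) 0 := by
  apply NonarchimedeanAddGroup.summable_of_tendsto_cofinite_zero
  rw [Nat.cofinite_eq_atTop]
  have h := fwdDiff_tendsto_zero' f
  rw [tendsto_zero_iff_norm_tendsto_zero] at h ⊢
  refine squeeze_zero (fun n => norm_nonneg _) (fun n => ?_) h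
  rw [norm_mul]
  exact mul_le_of_le_one_left (norm_nonneg _) (PadicInt.norm_le_one _)

/-- If a measure kills all the `c n`, it is zero. -/
lemma measure_eq_zero (μ : C(ℤ_[p], ℤ_[p]) →ₗ[ℤ_[p]] ℤ_[p])
    (h0 : ∀ n, μ (c n) = 0) (f : C(ℤ_[p], ℤ_[p])) : μ f = 0 := by
  have key : ∀ k : ℕ, ‖μ f‖ ≤ ((p : ℝ) ^ (-(k:ℤ))) := by
    intro k
    have hε : (0 : ℝ) < (p : ℝ) ^ (-(k:ℤ)) :=
      zpow_pos (by exact_mod_cast (Fact.out : p.Prime).pos) _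
    -- find a good partial Mahler sum
    obtain ⟨N, hN⟩ := Metric.tendsto_atTop.mp
      ((hasSum_mahler (toQp f)).tendsto_sum_nat) _ hε
    have hN' := hN N le_rfl
    set S : C(ℤ_[p], ℤ_[p]) :=
      ∑ n ∈ Finset.range N, ((fwdDiff (1:ℤ_[p]))^[n] (⇑f) 0) • c n with hS
    set g : C(ℤ_[p], ℤ_[p]) := f - S with hgdef
    set T : C(ℤ_[p], ℚ_[p]) :=
      ∑ i ∈ Finset.range N, mahlerTerm ((fwdDiff (1:ℤ_[p]))^[i] (⇑(toQp f)) 0) i with hT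
    -- pointwise bound on g
    have hg : ∀ x : ℤ_[p], ‖g x‖ ≤ (p : ℝ) ^ (-(k:ℤ)) := by
      intro x
      have hgx : ((g x : ℤ_[p]) : ℚ_[p]) = (toQp f - T) x := by
        simp only [hgdef, hT, ContinuousMap.sub_apply, PadicInt.coe_sub, hS,
          ContinuousMap.sum_apply, ContinuousMap.smul_apply, smul_eq_mul,
          coe_sum, PadicInt.coe_mul, mahlerTerm_apply, toQp_apply]
        congr 1
        refine Finset.sum_congr rfl fun n hn => ?_
        rw [cast_fwdDiff, c_cast_eq_mahler c hc, mul_comm]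
        rfl
      rw [PadicInt.norm_def, hgx]
      refine le_trans (ContinuousMap.norm_coe_le_norm _ x) ?_
      rw [show toQp f - T = -(T - toQp f) by ring, norm_neg, ← dist_eq_norm]
      exact hN'.le
    -- divide g by p^k
    have hpk : ((p : ℚ_[p]) ^ k) ≠ 0 := by
      exact_mod_cast pow_ne_zero k (Nat.cast_ne_zero.mpr (Fact.out : p.Prime).ne_zero)
    have hnormpk : ‖(p : ℚ_[p]) ^ k‖ = (p : ℝ) ^ (-(k:ℤ)) := by
      rw [_root_.norm_pow, Padic.norm_p, inv_pow, zpow_neg, zpow_natCast]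
    have hbound : ∀ x : ℤ_[p], ‖(g x : ℚ_[p]) / (p : ℚ_[p]) ^ k‖ ≤ 1 := by
      intro x
      rw [norm_div, hnormpk, div_le_one (by positivity), ← PadicInt.norm_def]
      exact hg x
    set h : C(ℤ_[p], ℤ_[p]) :=
      ⟨fun x => ⟨(g x : ℚ_[p]) / (p : ℚ_[p]) ^ k, hbound x⟩,
       Continuous.subtype_mk ((continuous_subtype_val.comp g.continuous).div_const _) hbound⟩
      with hh
    have hgh : g = ((p : ℤ_[p]) ^ k) • h := by
      ext x
      apply Subtype.coe_injective
      show ((g x : ℤ_[p]) : ℚ_[p]) = (((p : ℤ_[p]) ^ k * h x : ℤ_[p]) : ℚ_[p])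
      rw [PadicInt.coe_mul, PadicInt.coe_pow, PadicInt.coe_natCast]
      show (g x : ℚ_[p]) = (p : ℚ_[p]) ^ k * ((g x : ℚ_[p]) / (p : ℚ_[p]) ^ k)
      field_simp
    -- conclude
    have hf : f = S + g := by rw [hgdef]; ring
    have : μ f = ((p : ℤ_[p]) ^ k) * μ h := by
      rw [hf, map_add, hgh, map_smul, smul_eq_mul]
      have : μ S = 0 := by
        rw [hS, map_sum]
        refine Finset.sum_eq_zero fun n hn => ?_
        rw [map_smul, h0 n, smul_zero]
      rw [this, zero_add]
    rw [this, norm_mul, PadicInt.norm_p_pow]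
    exact mul_le_of_le_one_right (by positivity) (PadicInt.norm_le_one _)
  -- hence μ f = 0
  have hp1 : (1 : ℝ) < (p : ℝ) := by exact_mod_cast (Fact.out : p.Prime).one_lt
  have htend : Filter.Tendsto (fun k : ℕ => (p : ℝ) ^ (-(k:ℤ))) atTop (𝓝 0) := by
    simpa only [zpow_neg, zpow_natCast, ← inv_pow] using
      tendsto_pow_atTop_nhds_zero_of_lt_one (by positivity)
        (inv_lt_one_of_one_lt₀ hp1)
  have := ge_of_tendsto' htend key
  exact norm_le_zero_iff.mp this

end MahlerMeasureAux

/-- Mahler's theorem for measures: if `c n : ℤ_p → ℤ_p` is the `n`-th binomial coefficient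
function `x ↦ x(x−1)⋯(x−n+1)/n!`, then the `ℤ_p`-linear map
`Meas(ℤ_p, ℤ_p) = Hom_{ℤ_p}(C(ℤ_p, ℤ_p), ℤ_p) → ℤ_p[[T]]`, `μ ↦ ∑_{n≥0} μ(c_n)·Tⁿ`,
is bijective, i.e. an isomorphism of `ℤ_p`-modules. -/
theorem measureToPowerSeries_bijective (p : ℕ) [Fact p.Prime]
    (c : ℕ → C(ℤ_[p], ℤ_[p]))
    (hc : ∀ (n : ℕ) (x : ℤ_[p]),
      ((c n x : ℤ_[p]) : ℚ_[p]) =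
        (∏ i ∈ Finset.range n, ((x : ℚ_[p]) - (i : ℚ_[p]))) / (n ! : ℚ_[p])) :
    Function.Bijective (measureToPowerSeries p c) := by
  classical
  constructor
  · -- injectivity
    intro μ ν hμν
    have hsub : ∀ n, (μ - ν) (c n) = 0 := by
      intro n
      have h := congrArg (PowerSeries.coeff n) hμν
      simp only [measureToPowerSeries, LinearMap.coe_mk, AddHom.coe_mk,
        PowerSeries.coeff_mk] at h
      simp [LinearMap.sub_apply, h]
    ext f
    have h0 := MahlerMeasureAux.measure_eq_zero c hc (μ - ν) hsub f
    rw [LinearMap.sub_apply, sub_eq_zero] at h0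
    exact h0
  · -- surjectivity
    intro F
    set b : ℕ → ℤ_[p] := fun n => PowerSeries.coeff n F with hb
    refine ⟨{ toFun := fun f => ∑' n, b n * (fwdDiff (1:ℤ_[p]))^[n] (⇑f) 0,
              map_add' := ?_, map_smul' := ?_ }, ?_⟩
    · intro f g
      have h1 : ⇑(f + g) = ⇑f + ⇑g := rfl
      simp only [h1, fwdDiff_iter_add, Pi.add_apply, mul_add]
      exact Summable.tsum_add (MahlerMeasureAux.summable_aux f b) (MahlerMeasureAux.summable_aux g b)
    · intro r f
      have h1 : ⇑(r • f) = r • ⇑f := rfl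
      simp only [h1, fwdDiff_iter_const_smul, Pi.smul_apply, smul_eq_mul, RingHom.id_apply]
      rw [← Summable.tsum_mul_left r (MahlerMeasureAux.summable_aux f b)]
      exact tsum_congr fun n => by ring
    · apply PowerSeries.ext; intro n
      simp only [measureToPowerSeries, LinearMap.coe_mk, AddHom.coe_mk, PowerSeries.coeff_mk]
      rw [tsum_eq_single n]
      · rw [MahlerMeasureAux.fwdDiff_c_zero c hc]; simp [hb]
      · intro m hm
        rw [MahlerMeasureAux.fwdDiff_c_zero c hc]
        simp [hm]
end
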